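/- Fix integers T, n with n ≥ T ≥ 1 and a weight vector w ∈ ℂ^T. Let z_i = e^{2πj i/n} for i = 0,...,n−1, let φ(z) = (1, z, ..., z^{T−1}), and let Toep(v) denote the T×T lower-triangular Toeplitz matrix with first column v. Then ∑_{i=0}^{n−1} Toep(w ⊙ φ(z_i))* Toep(w ⊙ φ(z_i)) = n · diag(∑_{i=1}^T |w_i|², ∑_{i=1}^{T−1} |w_i|², ..., |w_1|²), where ⊙ denotes entrywise product. -/

import Mathlib

open Matrix Complex

/-- Lower-triangular Toeplitz matrix with first column `v`. -/
def ToepC {T : ℕ} (v : Fin T → ℂ) : Matrix (Fin T) (Fin T) ℂ :=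
  fun k ℓ => if (ℓ : ℕ) ≤ (k : ℕ) then
    v ⟨(k : ℕ) - (ℓ : ℕ), lt_of_le_of_lt (Nat.sub_le _ _) k.isLt⟩ else 0

lemma sum_pow_exp_eq_zero (n : ℕ) (d : ℤ) (hd : d ≠ 0) (hdn : d.natAbs < n) :
    ∑ i ∈ Finset.range n, Complex.exp (2 * Real.pi * Complex.I * d / n) ^ i = 0 := by
  have hn : 0 < n := lt_of_le_of_lt (Nat.zero_le _) hdn
  have hn' : (n : ℂ) ≠ 0 := Nat.cast_ne_zero.mpr hn.ne'
  set x := Complex.exp (2 * Real.pi * Complex.I * d / n) with hx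
  have hxn : x ^ n = 1 := by
    rw [hx, ← Complex.exp_nat_mul]
    have h2 : (n : ℂ) * (2 * Real.pi * Complex.I * d / n) = d * (2 * Real.pi * Complex.I) := by
      field_simp
    rw [h2, Complex.exp_int_mul_two_pi_mul_I]
  have hx1 : x ≠ 1 := by
    intro h
    rw [hx, Complex.exp_eq_one_iff] at h
    obtain ⟨k, hk⟩ := h
    have hpi : (Real.pi : ℂ) ≠ 0 := by exact_mod_cast Real.pi_ne_zero
    have hdk : (d : ℂ) = k * n := by
      field_simp at hk
      have h2 : (2 : ℂ) * Real.pi * Complex.I ≠ 0 := by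
        simp [hpi, Complex.I_ne_zero]
      have h3 : (2 * Real.pi * Complex.I) * (d : ℂ)
          = (2 * Real.pi * Complex.I) * ((k : ℂ) * n) := by
        linear_combination (2 * Real.pi * Complex.I) * hk
      exact mul_left_cancel₀ h2 h3
    have hdk' : d = k * n := by exact_mod_cast hdk
    rcases eq_or_ne k 0 with rfl | hk0
    · simp at hdk'; exact hd hdk'
    · have h1 : 1 ≤ k.natAbs := Int.natAbs_pos.mpr hk0
      have : d.natAbs = k.natAbs * n := by
        rw [hdk', Int.natAbs_mul]; simp
      nlinarith
  have hg := geom_sum_eq hx1 n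
  rw [hg, hxn]
  simp

lemma conj_pow_mul_pow (i n a b : ℕ) :
    star (Complex.exp (2 * Real.pi * Complex.I * i / n) ^ a) *
      Complex.exp (2 * Real.pi * Complex.I * i / n) ^ b
    = Complex.exp (2 * Real.pi * Complex.I * ((b : ℤ) - (a : ℤ)) / n) ^ i := by
  rw [← Complex.exp_nat_mul, ← Complex.exp_nat_mul]
  rw [show star (Complex.exp ((a : ℂ) * (2 * Real.pi * Complex.I * i / n)))
      = (starRingEnd ℂ) (Complex.exp ((a : ℂ) * (2 * Real.pi * Complex.I * i / n))) from rfl]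
  rw [← Complex.exp_conj, ← Complex.exp_add, ← Complex.exp_nat_mul]
  congr 1
  have h : (starRingEnd ℂ) ((a : ℂ) * (2 * Real.pi * Complex.I * i / n))
      = -((a : ℂ) * (2 * Real.pi * Complex.I * i / n)) := by
    simp [_root_.map_mul, map_div₀, Complex.conj_I, Complex.conj_ofNat]
    ring
  rw [h]
  push_cast
  ring

lemma reindex_sum {M : Type*} [AddCommMonoid M] (T k : ℕ) (F : ℕ → M) :
    ∑ m ∈ Finset.range T, (if k ≤ m then F (m - k) else 0) = ∑ j ∈ Finset.range (T - k), F j := by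
  rw [← Finset.sum_filter]
  have h : (Finset.range T).filter (k ≤ ·) = Finset.Ico k T := by
    ext m; simp [Finset.mem_filter, Finset.mem_Ico, and_comm]
  rw [h, Finset.sum_Ico_eq_sum_range]
  simp

theorem toeplitz_sinusoid_covariance (T n : ℕ) (hT : 1 ≤ T) (hn : T ≤ n) (w : Fin T → ℂ) :
    ∑ i ∈ Finset.range n,
        (ToepC (fun k => w k * Complex.exp (2 * Real.pi * Complex.I * i / n) ^ (k : ℕ))).conjTranspose
          * ToepC (fun k => w k * Complex.exp (2 * Real.pi * Complex.I * i / n) ^ (k : ℕ)) =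
      (n : ℂ) • Matrix.diagonal
        (fun k : Fin T => ((∑ i : Fin (T - (k : ℕ)), ‖w ⟨(i : ℕ), by have := i.isLt; omega⟩‖ ^ 2 : ℝ) : ℂ)) := by
  ext k ℓ
  rw [Matrix.sum_apply]
  simp only [Matrix.mul_apply, Matrix.conjTranspose_apply, Matrix.smul_apply,
    Matrix.diagonal_apply, smul_eq_mul]
  rw [Finset.sum_comm]
  have key : ∀ m : Fin T,
      (∑ i ∈ Finset.range n,
        star (ToepC (fun k => w k * Complex.exp (2 * Real.pi * Complex.I * i / n) ^ (k : ℕ)) m k) *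
          ToepC (fun k => w k * Complex.exp (2 * Real.pi * Complex.I * i / n) ^ (k : ℕ)) m ℓ)
      = if h : (k : ℕ) ≤ (m : ℕ) ∧ (ℓ : ℕ) ≤ (m : ℕ) then
          star (w ⟨(m : ℕ) - (k : ℕ), lt_of_le_of_lt (Nat.sub_le _ _) m.isLt⟩) *
            w ⟨(m : ℕ) - (ℓ : ℕ), lt_of_le_of_lt (Nat.sub_le _ _) m.isLt⟩ *
            ∑ i ∈ Finset.range n,
              Complex.exp (2 * Real.pi * Complex.I * (((k : ℕ) : ℤ) - ((ℓ : ℕ) : ℤ)) / n) ^ i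
        else 0 := by
    intro m
    split_ifs with h
    · rw [Finset.mul_sum]
      apply Finset.sum_congr rfl
      intro i _
      simp only [ToepC, if_pos h.1, if_pos h.2]
      rw [star_mul']
      rw [mul_mul_mul_comm]
      rw [conj_pow_mul_pow]
      have e : Complex.exp (2 * Real.pi * Complex.I *
            (((((m : ℕ) - (ℓ : ℕ) : ℕ)) : ℤ) - ((((m : ℕ) - (k : ℕ) : ℕ)) : ℤ)) / n)
          = Complex.exp (2 * Real.pi * Complex.I * (((k : ℕ) : ℤ) - ((ℓ : ℕ) : ℤ)) / n) := by
        congr 1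
        push_cast [Nat.cast_sub h.1, Nat.cast_sub h.2]
        ring
      rw [e]
    · apply Finset.sum_eq_zero
      intro i _
      by_cases h1 : (k : ℕ) ≤ (m : ℕ) <;> by_cases h2 : (ℓ : ℕ) ≤ (m : ℕ)
      · exact absurd ⟨h1, h2⟩ h
      all_goals simp [ToepC, h1, h2]
  simp only [key]
  by_cases hkl : k = ℓ
  · subst hkl
    have hgeo : (∑ i ∈ Finset.range n,
        Complex.exp (2 * Real.pi * Complex.I * (((k : ℕ) : ℤ) - ((k : ℕ) : ℤ)) / n) ^ i) = n := by
      simp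
    simp only [hgeo, and_self, if_pos rfl]
    set F : ℕ → ℂ := fun d => if hd : d < T then star (w ⟨d, hd⟩) * w ⟨d, hd⟩ else 0 with hFdef
    have hL : (∑ m : Fin T, if hc : (k : ℕ) ≤ (m : ℕ) then
          star (w ⟨(m : ℕ) - (k : ℕ), lt_of_le_of_lt (Nat.sub_le _ _) m.isLt⟩) *
            w ⟨(m : ℕ) - (k : ℕ), lt_of_le_of_lt (Nat.sub_le _ _) m.isLt⟩ * (n : ℂ)
        else 0)
        = (∑ m ∈ Finset.range T, (if (k : ℕ) ≤ m then F (m - (k : ℕ)) else 0)) * n := by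
      rw [Finset.sum_mul, ← Fin.sum_univ_eq_sum_range
        (fun m => (if (k : ℕ) ≤ m then F (m - (k : ℕ)) else 0) * n) T]
      apply Finset.sum_congr rfl
      intro m _
      by_cases hc : (k : ℕ) ≤ (m : ℕ)
      · have hlt : (m : ℕ) - (k : ℕ) < T := lt_of_le_of_lt (Nat.sub_le _ _) m.isLt
        simp [hc, hFdef, hlt]
      · simp [hc]
    rw [hL, reindex_sum]
    have hR : ∑ j ∈ Finset.range (T - (k : ℕ)), F j
        = ∑ i : Fin (T - (k : ℕ)), ((‖w ⟨(i : ℕ), by have := i.isLt; omega⟩‖ ^ 2 : ℝ) : ℂ) := by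
      rw [Finset.sum_range]
      apply Finset.sum_congr rfl
      intro i _
      have hi : (i : ℕ) < T := by have := i.isLt; omega
      simp only [hFdef, dif_pos hi]
      rw [show star (w ⟨(i : ℕ), hi⟩) = (starRingEnd ℂ) (w ⟨(i : ℕ), hi⟩) from rfl]
      rw [mul_comm, Complex.mul_conj, Complex.sq_norm]
    rw [hR]
    push_cast
    ring
  · have hd : (((k : ℕ) : ℤ) - ((ℓ : ℕ) : ℤ)) ≠ 0 := by
      have : (k : ℕ) ≠ (ℓ : ℕ) := fun h => hkl (Fin.ext h)
      omega
    have hdn : (((k : ℕ) : ℤ) - ((ℓ : ℕ) : ℤ)).natAbs < n := by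
      have hk := k.isLt; have hl := ℓ.isLt; omega
    have hzero := sum_pow_exp_eq_zero n (((k : ℕ) : ℤ) - ((ℓ : ℕ) : ℤ)) hd hdn
    push_cast at hzero
    simp [hzero, hkl]
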